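/- Let d ≥ 1, let ϑ ∈ ℤ^d be nonzero, and define the linear order ≺ on ℤ^d by: x ≺ y if and only if x·ϑ < y·ϑ, or x·ϑ = y·ϑ and x precedes y lexicographically. Let ν be a probability measure on {0,1}^{E^d}, the space of undirected nearest-neighbor edge configurations on ℤ^d with the product σ-algebra, invariant under all translations of ℤ^d. Then ν-almost surely, no infinite connected component of the open subgraph possesses a ≺-least element (a progenitor). -/

import Mathlib

open MeasureTheory

/-- Vertices of the `d`-dimensional lattice. -/
abbrev Vtx (d : ℕ) := Fin d → ℤ

/-- ℓ¹-distance on `ℤ^d`. -/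
def dist1 {d : ℕ} (x y : Vtx d) : ℤ := ∑ i, |x i - y i|

/-- Standard dot product on `ℤ^d`. -/
def dotZ {d : ℕ} (x y : Vtx d) : ℤ := ∑ i, x i * y i

/-- Lexicographic (strict) order on `ℤ^d`: compare by the first differing coordinate. -/
def LexLt {d : ℕ} (x y : Vtx d) : Prop :=
  ∃ i : Fin d, (∀ j : Fin d, j < i → x j = y j) ∧ x i < y i

/-- `x ≺ y`: `x·ϑ < y·ϑ`, or `x·ϑ = y·ϑ` and `x` precedes `y` lexicographically. -/
def Prec {d : ℕ} (ϑ x y : Vtx d) : Prop :=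
  dotZ x ϑ < dotZ y ϑ ∨ (dotZ x ϑ = dotZ y ϑ ∧ LexLt x y)

/-- An undirected nearest-neighbor edge configuration on `ℤ^d`. -/
abbrev UConfig (d : ℕ) := Sym2 (Vtx d) → Bool

/-- `x` and `y` are joined by an open edge of `ω`. -/
def OpenAdj {d : ℕ} (ω : UConfig d) (x y : Vtx d) : Prop :=
  dist1 x y = 1 ∧ ω s(x, y) = true

/-- Translation of an undirected configuration by `z`. -/
def shiftU {d : ℕ} (z : Vtx d) (ω : UConfig d) : UConfig d :=
  fun e => ω (e.map (· + z))

/-- Connectivity in the open subgraph. -/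
def Conn {d : ℕ} (ω : UConfig d) : Vtx d → Vtx d → Prop :=
  Relation.ReflTransGen (OpenAdj ω)

section Aux

variable {d : ℕ}

lemma dist1_comm (x y : Vtx d) : dist1 x y = dist1 y x := by
  simp [dist1, abs_sub_comm]

lemma dist1_add (x y z : Vtx d) : dist1 (x + z) (y + z) = dist1 x y := by
  simp [dist1, Pi.add_apply, add_sub_add_right_eq_sub]

lemma openAdj_symm (ω : UConfig d) : Symmetric (OpenAdj ω) := by
  intro x y h
  exact ⟨by rw [dist1_comm]; exact h.1, by rw [Sym2.eq_swap]; exact h.2⟩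

lemma conn_symm (ω : UConfig d) {x y : Vtx d} (h : Conn ω x y) : Conn ω y x :=
  haveI : Std.Symm (OpenAdj ω) := ⟨openAdj_symm ω⟩
  Relation.ReflTransGen.symmetric.symm _ _ h

lemma openAdj_shift (z : Vtx d) (ω : UConfig d) (a b : Vtx d) :
    OpenAdj (shiftU z ω) a b ↔ OpenAdj ω (a + z) (b + z) := by
  unfold OpenAdj shiftU
  rw [Sym2.map_pair_eq, dist1_add]

lemma conn_shift (z : Vtx d) (ω : UConfig d) (a b : Vtx d) :
    Conn (shiftU z ω) a b ↔ Conn ω (a + z) (b + z) := by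
  constructor
  · intro h
    exact Relation.ReflTransGen.lift (fun v => v + z)
      (fun p q hpq => (openAdj_shift z ω p q).1 hpq) _ _ h
  · intro h
    have h2 : Conn (shiftU z ω) (a + z + -z) (b + z + -z) :=
      Relation.ReflTransGen.lift (fun v => v + -z)
        (fun p q hpq => (openAdj_shift z ω (p + -z) (q + -z)).2 (by
          simpa [add_assoc] using hpq)) _ _ h
    simpa [add_assoc] using h2

lemma dotZ_add_left (x z w : Vtx d) : dotZ (x + z) w = dotZ x w + dotZ z w := by
  simp [dotZ, Pi.add_apply, add_mul, Finset.sum_add_distrib]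

lemma lexLt_shift_mp (x y z : Vtx d) (h : LexLt x y) : LexLt (x + z) (y + z) := by
  obtain ⟨i, hj, hi⟩ := h
  exact ⟨i, fun j hji => by simp [Pi.add_apply, hj j hji], by
    simpa [Pi.add_apply] using hi⟩

lemma lexLt_shift (x y z : Vtx d) : LexLt (x + z) (y + z) ↔ LexLt x y := by
  refine ⟨fun h => ?_, lexLt_shift_mp x y z⟩
  have := lexLt_shift_mp (x + z) (y + z) (-z) h
  simpa [add_assoc] using this

lemma prec_shift (ϑ x y z : Vtx d) : Prec ϑ (x + z) (y + z) ↔ Prec ϑ x y := by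
  unfold Prec
  rw [dotZ_add_left, dotZ_add_left, add_lt_add_iff_right, add_left_inj, lexLt_shift]

lemma lexLt_asymm {x y : Vtx d} (h1 : LexLt x y) (h2 : LexLt y x) : False := by
  obtain ⟨i, hj, hi⟩ := h1
  obtain ⟨i', hj', hi'⟩ := h2
  rcases lt_trichotomy i i' with h | h | h
  · exact absurd (hj' i h).symm (ne_of_lt hi)
  · subst h; exact lt_asymm hi hi'
  · exact absurd (hj i' h).symm (ne_of_lt hi')

lemma prec_asymm {ϑ x y : Vtx d} (h1 : Prec ϑ x y) (h2 : Prec ϑ y x) : False := by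
  rcases h1 with h1 | ⟨he1, hl1⟩ <;> rcases h2 with h2 | ⟨he2, hl2⟩
  · exact lt_asymm h1 h2
  · rw [he2] at h1; exact lt_irrefl _ h1
  · rw [he1] at h2; exact lt_irrefl _ h2
  · exact lexLt_asymm hl1 hl2

/-- The event: the cluster of `x` is infinite and `p` is its `≺`-least element. -/
def ProgEv (d : ℕ) (ϑ : Vtx d) (x p : Vtx d) : Set (UConfig d) :=
  {ω | {y | Conn ω x y}.Infinite ∧ Conn ω x p ∧
    ∀ y : Vtx d, Conn ω x y → (Prec ϑ p y ∨ p = y)}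

lemma measurableSet_openAdj (x y : Vtx d) :
    MeasurableSet {ω : UConfig d | OpenAdj ω x y} := by
  by_cases h : dist1 x y = 1
  · have he : {ω : UConfig d | OpenAdj ω x y} = (fun ω : UConfig d => ω s(x, y)) ⁻¹' {true} := by
      ext ω; simp [OpenAdj, h]
    rw [he]
    exact measurable_pi_apply s(x, y) (measurableSet_singleton true)
  · have he : {ω : UConfig d | OpenAdj ω x y} = ∅ := by
      ext ω; simp [OpenAdj, h]
    rw [he]; exact MeasurableSet.empty

lemma measurableSet_chain (x : Vtx d) (l : List (Vtx d)) :
    MeasurableSet {ω : UConfig d | List.Chain (OpenAdj ω) x l} := by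
  induction l generalizing x with
  | nil => simp [List.Chain]
  | cons y l ih =>
      have he : {ω : UConfig d | List.Chain (OpenAdj ω) x (y :: l)} =
          {ω | OpenAdj ω x y} ∩ {ω | List.Chain (OpenAdj ω) y l} := by
        ext ω; simp [List.Chain, List.isChain_cons_cons]
      rw [he]
      exact (measurableSet_openAdj x y).inter (ih y)

lemma measurableSet_conn (x y : Vtx d) :
    MeasurableSet {ω : UConfig d | Conn ω x y} := by
  have he : {ω : UConfig d | Conn ω x y} =
      ⋃ l : List (Vtx d), ⋃ (_ : List.getLast (x :: l) (List.cons_ne_nil x l) = y),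
        {ω | List.Chain (OpenAdj ω) x l} := by
    ext ω
    simp only [Set.mem_setOf_eq, Set.mem_iUnion]
    constructor
    · intro h
      obtain ⟨l, hc, hl⟩ := List.exists_isChain_cons_of_relationReflTransGen h
      exact ⟨l, hl, hc⟩
    · rintro ⟨l, hl, hc⟩
      exact List.relationReflTransGen_of_exists_isChain_cons l hc hl
  rw [he]
  exact MeasurableSet.iUnion fun l => MeasurableSet.iUnion fun _ => measurableSet_chain x l

lemma infinite_iff_finset (S : Set (Vtx d)) :
    S.Infinite ↔ ∀ F : Finset (Vtx d), ∃ y ∈ S, y ∉ F := by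
  constructor
  · exact fun h F => h.exists_notMem_finset F
  · intro h hfin
    obtain ⟨y, hyS, hyF⟩ := h hfin.toFinset
    exact hyF (hfin.mem_toFinset.2 hyS)

lemma measurableSet_progEv (ϑ x p : Vtx d) : MeasurableSet (ProgEv d ϑ x p) := by
  classical
  have h1 : MeasurableSet {ω : UConfig d | {y | Conn ω x y}.Infinite} := by
    have he : {ω : UConfig d | {y | Conn ω x y}.Infinite} =
        ⋂ F : Finset (Vtx d), ⋃ y : Vtx d, ⋃ (_ : y ∉ F), {ω | Conn ω x y} := by
      ext ω
      simp only [Set.mem_setOf_eq, Set.mem_iInter, Set.mem_iUnion, infinite_iff_finset]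
      constructor
      · intro h F; obtain ⟨y, hy, hyF⟩ := h F; exact ⟨y, hyF, hy⟩
      · intro h F; obtain ⟨y, hyF, hy⟩ := h F; exact ⟨y, hy, hyF⟩
    rw [he]
    exact MeasurableSet.iInter fun F => MeasurableSet.iUnion fun y =>
      MeasurableSet.iUnion fun _ => measurableSet_conn x y
  have h2 : ∀ y : Vtx d,
      MeasurableSet {ω : UConfig d | Conn ω x y → (Prec ϑ p y ∨ p = y)} := by
    intro y
    by_cases hq : Prec ϑ p y ∨ p = y
    · have he : {ω : UConfig d | Conn ω x y → (Prec ϑ p y ∨ p = y)} = Set.univ := by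
        ext ω; simp [hq]
      rw [he]; exact MeasurableSet.univ
    · have he : {ω : UConfig d | Conn ω x y → (Prec ϑ p y ∨ p = y)} =
          {ω : UConfig d | Conn ω x y}ᶜ := by
        ext ω; simp [hq]
      rw [he]; exact (measurableSet_conn x y).compl
  have he : ProgEv d ϑ x p =
      {ω : UConfig d | {y | Conn ω x y}.Infinite} ∩
        ({ω | Conn ω x p} ∩ ⋂ y : Vtx d, {ω | Conn ω x y → (Prec ϑ p y ∨ p = y)}) := by
    ext ω
    constructor
    · rintro ⟨a, b, c⟩; exact ⟨a, b, Set.mem_iInter.2 fun y => c y⟩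
    · rintro ⟨a, b, c⟩; exact ⟨a, b, fun y => Set.mem_iInter.1 c y⟩
  rw [he]
  exact h1.inter ((measurableSet_conn x p).inter (MeasurableSet.iInter h2))

lemma cluster_shift_infinite (z : Vtx d) (ω : UConfig d) (x : Vtx d) :
    {y | Conn (shiftU z ω) x y}.Infinite ↔ {y | Conn ω (x + z) y}.Infinite := by
  have he : (fun y : Vtx d => y + z) '' {y | Conn (shiftU z ω) x y} =
      {y | Conn ω (x + z) y} := by
    ext y
    simp only [Set.mem_image, Set.mem_setOf_eq]
    constructor
    · rintro ⟨w, hw, rfl⟩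
      exact (conn_shift z ω x w).1 hw
    · intro h
      exact ⟨y + -z, (conn_shift z ω x (y + -z)).2 (by simpa [add_assoc] using h),
        by simp [add_assoc]⟩
  rw [← he]
  exact (Set.infinite_image_iff ((add_left_injective z).injOn)).symm

lemma progEv_shift (ϑ x p z : Vtx d) :
    shiftU z ⁻¹' ProgEv d ϑ x p = ProgEv d ϑ (x + z) (p + z) := by
  ext ω
  simp only [Set.mem_preimage, ProgEv, Set.mem_setOf_eq]
  rw [cluster_shift_infinite, conn_shift]
  constructor
  · rintro ⟨hinf, hc, hmin⟩
    refine ⟨hinf, hc, fun y hy => ?_⟩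
    have := hmin (y + -z) ((conn_shift z ω x (y + -z)).2 (by simpa [add_assoc] using hy))
    rcases this with h | h
    · left
      have := (prec_shift ϑ p (y + -z) z).2 h
      simpa [add_assoc] using this
    · right; rw [h]; simp [add_assoc]
  · rintro ⟨hinf, hc, hmin⟩
    refine ⟨hinf, hc, fun y hy => ?_⟩
    have := hmin (y + z) ((conn_shift z ω x y).1 hy)
    rcases this with h | h
    · exact Or.inl ((prec_shift ϑ p y z).1 h)
    · exact Or.inr (add_right_cancel h)

lemma progEv_disjoint (ϑ x : Vtx d) :
    Pairwise (Function.onFun Disjoint fun p => ProgEv d ϑ x p) := by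
  intro p q hpq
  refine Set.disjoint_left.2 fun ω hp hq => hpq ?_
  obtain ⟨_, hcp, hminp⟩ := hp
  obtain ⟨_, hcq, hminq⟩ := hq
  rcases hminp q hcq with h | h
  · rcases hminq p hcp with h' | h'
    · exact absurd h (fun hh => prec_asymm hh h')
    · exact h'.symm
  · exact h

lemma progEv_move (ω : UConfig d) {ϑ x p y : Vtx d} (hω : ω ∈ ProgEv d ϑ x p)
    (hy : Conn ω x y) : ω ∈ ProgEv d ϑ y p := by
  obtain ⟨hinf, hc, hmin⟩ := hω
  have hsets : {w | Conn ω y w} = {w | Conn ω x w} := by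
    ext w
    exact ⟨fun h => hy.trans h, fun h => (conn_symm ω hy).trans h⟩
  refine ⟨by rw [hsets]; exact hinf, (conn_symm ω hy).trans hc, fun w hw => ?_⟩
  exact hmin w (hy.trans hw)

end Aux

/-- for a translation-invariant probability measure on undirected
nearest-neighbor configurations on `ℤ^d`, almost surely no infinite open cluster has a
`≺`-least element (progenitor). -/
theorem stmt10 (d : ℕ) (hd : 1 ≤ d) (ϑ : Vtx d) (hϑ : ϑ ≠ 0)
    (ν : Measure (UConfig d)) [IsProbabilityMeasure ν]
    (hinv : ∀ z : Vtx d, MeasurePreserving (shiftU z) ν ν) :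
    ∀ᵐ ω ∂ν, ∀ x : Vtx d, {y | Conn ω x y}.Infinite →
      ¬ ∃ p : Vtx d, Conn ω x p ∧ ∀ y : Vtx d, Conn ω x y → (Prec ϑ p y ∨ p = y) := by
  classical
  have hmeasure_shift : ∀ x p z : Vtx d,
      ν (ProgEv d ϑ (x + z) (p + z)) = ν (ProgEv d ϑ x p) := by
    intro x p z
    rw [← progEv_shift]
    exact (hinv z).measure_preimage (measurableSet_progEv ϑ x p).nullMeasurableSet
  -- the sum of probabilities that 0 has infinite cluster with progenitor p is ≤ 1
  have hsum1 : ∑' p : Vtx d, ν (ProgEv d ϑ 0 p) ≤ 1 := by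
    rw [← measure_iUnion (progEv_disjoint ϑ 0) (fun p => measurableSet_progEv ϑ 0 p)]
    exact prob_le_one
  have hmove : ∀ x : Vtx d, ν (ProgEv d ϑ x 0) = ν (ProgEv d ϑ 0 (-x)) := by
    intro x
    have := hmeasure_shift 0 (-x) x
    simpa using this
  have hsum2 : ∑' x : Vtx d, ν (ProgEv d ϑ x 0) ≤ 1 := by
    calc ∑' x : Vtx d, ν (ProgEv d ϑ x 0)
        = ∑' x : Vtx d, ν (ProgEv d ϑ 0 (-x)) := tsum_congr hmove
      _ = ∑' p : Vtx d, ν (ProgEv d ϑ 0 p) :=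
          (Equiv.neg (Vtx d)).tsum_eq (fun p => ν (ProgEv d ϑ 0 p))
      _ ≤ 1 := hsum1
  -- key step: ν (ProgEv d ϑ 0 0) = 0
  have hkey : ν (ProgEv d ϑ 0 0) = 0 := by
    by_contra hc
    have hpos : 0 < ν (ProgEv d ϑ 0 0) := pos_iff_ne_zero.2 hc
    have htail := ENNReal.tendsto_tsum_compl_atTop_zero
      (f := fun x : Vtx d => ν (ProgEv d ϑ x 0))
      (ne_top_of_le_ne_top ENNReal.one_ne_top hsum2)
    obtain ⟨F, hF⟩ := (htail.eventually (gt_mem_nhds hpos)).exists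
    have hsub : ProgEv d ϑ 0 0 ⊆
        ⋃ y : {y : Vtx d // y ∉ F}, ProgEv d ϑ (y : Vtx d) 0 := by
      intro ω hω
      obtain ⟨y, hy, hyF⟩ := hω.1.exists_notMem_finset F
      exact Set.mem_iUnion.2 ⟨⟨y, hyF⟩, progEv_move ω hω hy⟩
    have hle : ν (ProgEv d ϑ 0 0) ≤
        ∑' y : {y : Vtx d // y ∉ F}, ν (ProgEv d ϑ (y : Vtx d) 0) :=
      (measure_mono hsub).trans (measure_iUnion_le _)
    exact absurd (hle.trans_lt hF) (lt_irrefl _)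
  have hall : ∀ p : Vtx d, ν (ProgEv d ϑ p p) = 0 := by
    intro p
    have := hmeasure_shift 0 0 p
    simpa [hkey] using this
  rw [ae_iff]
  refine measure_mono_null ?_ (measure_iUnion_null hall)
  intro ω hω
  simp only [Set.mem_setOf_eq] at hω
  push_neg at hω
  obtain ⟨x, hinf, p, hcp, hmin⟩ := hω
  have hω0 : ω ∈ ProgEv d ϑ x p := ⟨hinf, hcp, hmin⟩
  exact Set.mem_iUnion.2 ⟨p, progEv_move ω hω0 hcp⟩
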